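/- For the Hirst matrices H₁, H₂, H₃ (4×4 nonnegative integer matrices given by H₁ = [[1,0,0,0],[0,1,0,0],[1,1,1,2],[1,1,0,1]], H₂ = [[1,0,0,0],[0,0,1,0],[1,1,1,2],[1,0,1,1]], H₃ = [[0,1,0,0],[0,0,1,0],[1,1,1,2],[0,1,1,1]]), in every finite product of these matrices, each entry of the third row is greater than or equal to every other entry in its column. -/

import Mathlib

/-- The Hirst matrices `H₁, H₂, H₃`. -/
def Hmat : Fin 3 → Matrix (Fin 4) (Fin 4) ℕ :=
  ![!![1,0,0,0;0,1,0,0;1,1,1,2;1,1,0,1],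
    !![1,0,0,0;0,0,1,0;1,1,1,2;1,0,1,1],
    !![0,1,0,0;0,0,1,0;1,1,1,2;0,1,1,1]]

/-- In every nonempty product of Hirst matrices, each entry of the third row is greater than or
equal to every other entry in its column. -/
theorem stmt18 (l : List (Fin 3)) (hl : l ≠ []) :
    ∀ i j : Fin 4, ((l.map Hmat).prod) i j ≤ ((l.map Hmat).prod) 2 j := by
  have hA : ∀ (k : Fin 3) (i j : Fin 4), Hmat k i j ≤ Hmat k 2 j := by
    intro k i j; fin_cases k <;> fin_cases i <;> fin_cases j <;> decide
  induction l with
  | nil => simp at hl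
  | cons a t ih =>
    intro i j
    cases t with
    | nil => simpa using hA a i j
    | cons b t' =>
      simp only [List.map_cons, List.prod_cons, Matrix.mul_apply]
      exact Finset.sum_le_sum fun k _ => Nat.mul_le_mul_right _ (hA a i k)
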